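/- Let 𝒳 and 𝒴 be finite sets with |𝒴| even and |𝒴| ≥ 2, let G be a two-universal random function from 𝒳 to 𝒴, and let F be a uniform balanced random predicate on 𝒴, independent of G. Then the random predicate H := F ∘ G on 𝒳 is two-universal, i.e., Pr[F(G(x)) = F(G(x'))] ≤ 1/2 for all distinct x, x' ∈ 𝒳. -/

import Mathlib

open Finset

/-- The balanced predicates on a finite type `𝒴`: predicates `f : 𝒴 → Bool` with
`|f⁻¹(0)| = |f⁻¹(1)|` (identifying `{0,1}` with `Bool`). -/
def Bal (𝒴 : Type*) [Fintype 𝒴] [DecidableEq 𝒴] : Finset (𝒴 → Bool) :=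
  univ.filter (fun f =>
    (univ.filter (fun y => f y = false)).card = (univ.filter (fun y => f y = true)).card)

/-- The distribution of a uniform balanced random predicate on `𝒴`. -/
noncomputable def PF {𝒴 : Type*} [Fintype 𝒴] [DecidableEq 𝒴] (f : 𝒴 → Bool) : ℝ :=
  if f ∈ Bal 𝒴 then ((Bal 𝒴).card : ℝ)⁻¹ else 0

set_option linter.unusedSectionVars false

section Aux
variable {𝒴 : Type} [Fintype 𝒴] [DecidableEq 𝒴]

lemma bal_nonempty {m : ℕ} (hc : Fintype.card 𝒴 = m + m) : (Bal 𝒴).Nonempty := by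
  obtain ⟨t, hts, htc⟩ := Finset.exists_subset_card_eq (s := (univ : Finset 𝒴)) (n := m)
    (by rw [Finset.card_univ, hc]; omega)
  refine ⟨fun y => decide (y ∈ t), ?_⟩
  simp only [Bal, Finset.mem_filter, Finset.mem_univ, true_and]
  have h1 : (univ.filter (fun y => decide (y ∈ t) = true)) = t := by ext y; simp
  have h2 : (univ.filter (fun y => decide (y ∈ t) = false)) = tᶜ := by ext y; simp
  rw [h1, h2, Finset.card_compl, htc, hc]
  omega

lemma filter_comp_perm (σ : Equiv.Perm 𝒴) (p : 𝒴 → Bool) (b : Bool) :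
    (univ.filter (fun y => p (σ y) = b)).card = (univ.filter (fun y => p y = b)).card := by
  have : (univ.filter (fun y => p y = b)) =
      (univ.filter (fun y => p (σ y) = b)).map σ.toEmbedding := by
    ext z
    simp only [Finset.mem_map, Finset.mem_filter, Finset.mem_univ, true_and,
      Equiv.coe_toEmbedding]
    constructor
    · intro h; exact ⟨σ.symm z, by simpa using h, by simp⟩
    · rintro ⟨y, hy, rfl⟩; exact hy
  rw [this, Finset.card_map]

lemma perm_mem_bal (σ : Equiv.Perm 𝒴) {f : 𝒴 → Bool} (hf : f ∈ Bal 𝒴) :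
    (fun y => f (σ y)) ∈ Bal 𝒴 := by
  simp only [Bal, Finset.mem_filter, Finset.mem_univ, true_and] at hf ⊢
  rw [filter_comp_perm σ f false, filter_comp_perm σ f true]
  exact hf

lemma exists_perm_pair {α : Type} [DecidableEq α] {a b c d : α} (hab : a ≠ b) (hcd : c ≠ d) :
    ∃ σ : Equiv.Perm α, σ c = a ∧ σ d = b := by
  set z := Equiv.swap a c d with hz
  have hza : z ≠ a := by
    intro h
    have : d = c := (Equiv.swap a c).injective (by rw [← hz, h, Equiv.swap_apply_right])
    exact hcd this.symm
  refine ⟨(Equiv.swap a c).trans (Equiv.swap b z), ?_, ?_⟩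
  · simp only [Equiv.trans_apply, Equiv.swap_apply_right]
    exact Equiv.swap_apply_of_ne_of_ne hab hza.symm
  · simp only [Equiv.trans_apply, ← hz, Equiv.swap_apply_right]

lemma N_invariant {y1 y1' y2 y2' : 𝒴} (h1 : y1 ≠ y1') (h2 : y2 ≠ y2') :
    ((Bal 𝒴).filter (fun f => f y1 = f y1')).card
      = ((Bal 𝒴).filter (fun f => f y2 = f y2')).card := by
  obtain ⟨σ, hσ1, hσ2⟩ := exists_perm_pair h1 h2
  refine Finset.card_bij' (fun f _ => fun y => f (σ y)) (fun f _ => fun y => f (σ.symm y))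
    ?_ ?_ ?_ ?_
  · intro f hf
    simp only [Finset.mem_filter] at hf ⊢
    exact ⟨perm_mem_bal σ hf.1, by rw [hσ1, hσ2]; exact hf.2⟩
  · intro f hf
    simp only [Finset.mem_filter] at hf ⊢
    refine ⟨perm_mem_bal σ.symm hf.1, ?_⟩
    rw [← hσ1, ← hσ2, Equiv.symm_apply_apply, Equiv.symm_apply_apply]
    exact hf.2
  · intro f _; funext y; simp
  · intro f _; funext y; simp

lemma inner_count {m : ℕ} (hc : Fintype.card 𝒴 = m + m) {f : 𝒴 → Bool} (hf : f ∈ Bal 𝒴) :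
    (univ.offDiag.filter (fun p : 𝒴 × 𝒴 => f p.1 = f p.2)).card = (m*m - m) + (m*m - m) := by
  have hmem := (Finset.mem_filter.1 hf).2
  set A := univ.filter (fun y => f y = true) with hA
  set Bf := univ.filter (fun y => f y = false) with hBf
  have hsum : Bf.card + A.card = m + m := by
    rw [← hc, ← Finset.card_univ]
    have hneg : (univ.filter (fun y => ¬ f y = false)) = A := by ext y; simp [hA]
    rw [← hneg]
    exact Finset.card_filter_add_card_filter_not _
  have hAc : A.card = m := by omega
  have hBc : Bf.card = m := by omega
  have hset : univ.offDiag.filter (fun p : 𝒴 × 𝒴 => f p.1 = f p.2)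
      = A.offDiag ∪ Bf.offDiag := by
    ext ⟨a, b⟩
    simp only [Finset.mem_filter, Finset.mem_offDiag, Finset.mem_union, Finset.mem_univ,
      true_and, hA, hBf]
    cases hfa : f a <;> cases hfb : f b <;> simp [hfa, hfb]
  have hdisj : Disjoint A.offDiag Bf.offDiag := by
    rw [Finset.disjoint_left]
    rintro ⟨a, b⟩ ha hb
    have h1 := (Finset.mem_offDiag.1 ha).1
    have h2 := (Finset.mem_offDiag.1 hb).1
    simp [hA] at h1; simp [hBf] at h2; simp [h1] at h2
  rw [hset, Finset.card_union_of_disjoint hdisj, Finset.offDiag_card, Finset.offDiag_card,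
    hAc, hBc]

lemma count_identity {m : ℕ} (hc : Fintype.card 𝒴 = m + m) {y y' : 𝒴} (h : y ≠ y') :
    ((Bal 𝒴).filter (fun f => f y = f y')).card * ((m+m)*(m+m) - (m+m)) =
      (Bal 𝒴).card * ((m*m - m) + (m*m - m)) := by
  have hswap : ∑ p ∈ univ.offDiag, ((Bal 𝒴).filter (fun f => f p.1 = f p.2)).card
      = ∑ f ∈ Bal 𝒴, (univ.offDiag.filter (fun p : 𝒴 × 𝒴 => f p.1 = f p.2)).card := by
    simp only [Finset.card_filter]
    exact Finset.sum_comm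
  have hL : ∑ p ∈ univ.offDiag, ((Bal 𝒴).filter (fun f => f p.1 = f p.2)).card
      = ((m+m)*(m+m) - (m+m)) * ((Bal 𝒴).filter (fun f => f y = f y')).card := by
    rw [Finset.sum_congr rfl (fun p hp => N_invariant (Finset.mem_offDiag.1 hp).2.2 h)]
    rw [Finset.sum_const, smul_eq_mul, Finset.offDiag_card, Finset.card_univ, hc]
  have hR : ∑ f ∈ Bal 𝒴, (univ.offDiag.filter (fun p : 𝒴 × 𝒴 => f p.1 = f p.2)).card
      = (Bal 𝒴).card * ((m*m - m) + (m*m - m)) := by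
    rw [Finset.sum_congr rfl (fun f hf => inner_count hc hf), Finset.sum_const, smul_eq_mul]
  rw [mul_comm]
  rw [← hL, hswap, hR]

end Aux

/-- **Lemma `lem:binuniv`**: let `𝒳, 𝒴` be finite sets with `|𝒴|` even and `|𝒴| ≥ 2`,
let `G` be a two-universal random function from `𝒳` to `𝒴` (distribution `PG`), and let
`F` be a uniform balanced random predicate on `𝒴`, independent of `G`. Then the random
predicate `H := F ∘ G` is two-universal: `Pr[F(G(x)) = F(G(x'))] ≤ 1/2` for all
distinct `x, x' ∈ 𝒳`. -/
theorem lemma_binuniv {𝒳 𝒴 : Type} [Fintype 𝒳] [DecidableEq 𝒳]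
    [Fintype 𝒴] [DecidableEq 𝒴]
    (heven : Even (Fintype.card 𝒴)) (hcard : 2 ≤ Fintype.card 𝒴)
    (PG : (𝒳 → 𝒴) → ℝ) (hPG0 : ∀ g, 0 ≤ PG g) (hPG1 : ∑ g, PG g = 1)
    (hGuniv : ∀ x x' : 𝒳, x ≠ x' →
      ∑ g ∈ univ.filter (fun g => g x = g x'), PG g ≤ 1 / (Fintype.card 𝒴 : ℝ)) :
    ∀ x x' : 𝒳, x ≠ x' →
      ∑ g, ∑ f, (if f (g x) = f (g x') then PG g * PF f else 0) ≤ 1 / 2 := by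
  intro x x' hxx
  obtain ⟨m, hm⟩ := heven
  have hm1 : 1 ≤ m := by omega
  have hBne : (Bal 𝒴).Nonempty := bal_nonempty hm
  have hBpos : (0:ℝ) < ((Bal 𝒴).card : ℝ) := by
    exact_mod_cast Finset.card_pos.2 hBne
  set M : ℝ := (m : ℝ) with hMdef
  have hM1 : (1:ℝ) ≤ M := by rw [hMdef]; exact_mod_cast hm1
  have h2M1 : (0:ℝ) < 2*M - 1 := by linarith
  -- total probability of PF
  have hsumPF : ∑ f : 𝒴 → Bool, PF f = 1 := by
    simp only [PF]
    rw [Finset.sum_ite_mem, Finset.univ_inter, Finset.sum_const, nsmul_eq_mul]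
    exact mul_inv_cancel₀ (ne_of_gt hBpos)
  -- value of the collision probability for distinct points
  have hT : ∀ y y' : 𝒴, y ≠ y' →
      ∑ f : 𝒴 → Bool, (if f y = f y' then PF f else 0) = (M-1)/(2*M-1) := by
    intro y y' hyy
    have hval : ∀ f : 𝒴 → Bool, (if f y = f y' then PF f else 0)
        = if f ∈ (Bal 𝒴).filter (fun f => f y = f y') then ((Bal 𝒴).card : ℝ)⁻¹ else 0 := by
      intro f
      by_cases h1 : f ∈ Bal 𝒴 <;> by_cases h2 : f y = f y' <;>
        simp [PF, Finset.mem_filter, h1, h2]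
    rw [Finset.sum_congr rfl (fun f _ => hval f), Finset.sum_ite_mem, Finset.univ_inter,
      Finset.sum_const, nsmul_eq_mul]
    -- now show N * B⁻¹ = (M-1)/(2M-1)
    have hid := count_identity hm hyy
    set N : ℕ := ((Bal 𝒴).filter (fun f => f y = f y')).card with hN
    have hcast : (N : ℝ) * ((M+M)*(M+M) - (M+M)) = ((Bal 𝒴).card : ℝ) * ((M*M - M) + (M*M - M)) := by
      have h1 : (m+m) ≤ (m+m)*(m+m) := by nlinarith [hm1]
      have h2 : m ≤ m*m := by nlinarith [hm1]
      have := congrArg (fun k : ℕ => (k : ℝ)) hid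
      push_cast [Nat.cast_sub h1, Nat.cast_sub h2] at this
      convert this using 2 <;> push_cast <;> ring
    have hNB : (N : ℝ) * (2*M - 1) = ((Bal 𝒴).card : ℝ) * (M - 1) := by
      have h2M : (0:ℝ) < 2*M := by linarith
      have key : (2*M) * ((N:ℝ)*(2*M-1) - ((Bal 𝒴).card : ℝ)*(M-1)) = 0 := by
        linear_combination hcast
      rcases mul_eq_zero.1 key with h | h
      · linarith
      · linarith
    rw [eq_div_iff h2M1.ne', mul_comm (N:ℝ), mul_assoc, hNB, ← mul_assoc,
      inv_mul_cancel₀ hBpos.ne', one_mul]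
  -- rewrite the double sum
  have hinner : ∀ g : 𝒳 → 𝒴, ∑ f : 𝒴 → Bool, (if f (g x) = f (g x') then PG g * PF f else 0)
      = PG g * ∑ f : 𝒴 → Bool, (if f (g x) = f (g x') then PF f else 0) := by
    intro g
    rw [Finset.mul_sum]
    exact Finset.sum_congr rfl (fun f _ => by split <;> simp
    )
  rw [Finset.sum_congr rfl (fun g _ => hinner g)]
  rw [← Finset.sum_filter_add_sum_filter_not univ (fun g => g x = g x')]
  set p : ℝ := (M-1)/(2*M-1) with hpdef
  have e1 : ∑ g ∈ univ.filter (fun g => g x = g x'),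
      PG g * (∑ f : 𝒴 → Bool, (if f (g x) = f (g x') then PF f else 0))
      = ∑ g ∈ univ.filter (fun g => g x = g x'), PG g := by
    refine Finset.sum_congr rfl (fun g hg => ?_)
    have hgx : g x = g x' := (Finset.mem_filter.1 hg).2
    rw [hgx]
    simp only [eq_self_iff_true, if_true]
    rw [hsumPF, mul_one]
  have e2 : ∑ g ∈ univ.filter (fun g => ¬ g x = g x'),
      PG g * (∑ f : 𝒴 → Bool, (if f (g x) = f (g x') then PF f else 0))
      = (∑ g ∈ univ.filter (fun g => ¬ g x = g x'), PG g) * p := by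
    rw [Finset.sum_mul]
    refine Finset.sum_congr rfl (fun g hg => ?_)
    have hgx : ¬ g x = g x' := (Finset.mem_filter.1 hg).2
    rw [hT _ _ hgx]
  rw [e1, e2]
  -- final arithmetic
  set q : ℝ := ∑ g ∈ univ.filter (fun g => g x = g x'), PG g with hqdef
  set r : ℝ := ∑ g ∈ univ.filter (fun g => ¬ g x = g x'), PG g with hrdef
  have hqr : q + r = 1 := by
    rw [hqdef, hrdef, Finset.sum_filter_add_sum_filter_not, hPG1]
  have hr0 : 0 ≤ r := Finset.sum_nonneg (fun g _ => hPG0 g)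
  have hq0 : 0 ≤ q := Finset.sum_nonneg (fun g _ => hPG0 g)
  have hqle : q * (2*M) ≤ 1 := by
    have h := hGuniv x x' hxx
    have hcardM : (Fintype.card 𝒴 : ℝ) = 2*M := by rw [hm]; push_cast; ring
    rw [hcardM] at h
    have h2M : (0:ℝ) < 2*M := by linarith
    calc q * (2*M) ≤ (1/(2*M)) * (2*M) := by
          exact mul_le_mul_of_nonneg_right h (le_of_lt h2M)
      _ = 1 := by field_simp
  have hp : p * (2*M - 1) = M - 1 := div_mul_cancel₀ _ (ne_of_gt h2M1)
  have hp0 : 0 ≤ p := div_nonneg (by linarith) (le_of_lt h2M1)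
  have expand : (2*(q + r*p) - 1) * (2*M - 1)
      = (2*q*M - 1) + (q + r - 1)*(2*(M-1)) + 2*r*(p*(2*M-1) - (M-1)) := by ring
  have hfin : (2*(q + r*p) - 1) * (2*M - 1) ≤ 0 := by
    rw [expand, hp, hqr]
    have : 2*q*M ≤ 1 := by linarith [hqle]
    simp only [sub_self, mul_zero, add_zero]
    linarith
  have : 2*(q + r*p) - 1 ≤ 0 := by
    by_contra hcon
    push_neg at hcon
    nlinarith
  linarith
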